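/- Any map C⁰-close to g has no fixed points in D: if h : M → M satisfies sup_{x ∈ M} dist(h(x), g(x)) < π − 2, then h(p) ≠ p for every p ∈ D. -/
import Mathlib


open Real MeasureTheory

noncomputable section

instance : Fact (0 < 2 * π) := ⟨by positivity⟩

/-- The cylinder `(ℝ/2πℤ) × ℝ`. -/
abbrev Cyl : Type := AddCircle (2 * π) × ℝ

/-- The quotient map `ℝ² → Cyl`. -/
def q2 (v : ℝ × ℝ) : Cyl := ((v.1 : AddCircle (2 * π)), v.2)

/-- The lift of a point of the cylinder to the fundamental domain `[-π, π) × ℝ`. -/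
def cylLift (m : Cyl) : ℝ × ℝ :=
  ((AddCircle.equivIco (2 * π) (-π) m.1 : ℝ), m.2)

/-- The Euclidean norm on `ℝ × ℝ`. -/
def eNorm (v : ℝ × ℝ) : ℝ := Real.sqrt (v.1 ^ 2 + v.2 ^ 2)

/-- Rotation of the plane about the origin by angle `a`. -/
def rot (a : ℝ) (v : ℝ × ℝ) : ℝ × ℝ :=
  (Real.cos a * v.1 - Real.sin a * v.2, Real.sin a * v.1 + Real.cos a * v.2)

/-- The planar twist map: rotate `v` about the origin by the angle `α (eNorm v)`. -/
def twist (α : ℝ → ℝ) (v : ℝ × ℝ) : ℝ × ℝ := rot (α (eNorm v)) v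

/-- The twist map descended to the cylinder. -/
def psi (α : ℝ → ℝ) (m : Cyl) : Cyl := q2 (twist α (cylLift m))

/-- The half rotation `(θ, s) ↦ (θ + π, s)` of the cylinder. -/
def phi (m : Cyl) : Cyl := (m.1 + ((π : ℝ) : AddCircle (2 * π)), m.2)

/-- The composition `g = φ ∘ ψ`. -/
def gmap (α : ℝ → ℝ) : Cyl → Cyl := phi ∘ psi α

/-- The image in the cylinder of the open Euclidean unit disk centered at the origin. -/
def Dset : Set Cyl := q2 '' {v : ℝ × ℝ | eNorm v < 1}

/-- The distance on the cylinder induced by the Euclidean metric on `ℝ²`. -/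
def cylDist (x y : Cyl) : ℝ := Real.sqrt (dist x.1 y.1 ^ 2 + dist x.2 y.2 ^ 2)

/-- The hypotheses on the twist angle profile `α`: continuous, non-increasing on `[0, ∞)`,
greater than `0.2` on `[0, 0.7]` and vanishing on `[0.9, ∞)`. -/
structure TwistAngle (α : ℝ → ℝ) : Prop where
  cont : Continuous α
  anti : AntitoneOn α (Set.Ici 0)
  big : ∀ r ∈ Set.Icc (0 : ℝ) 0.7, 0.2 < α r
  zero : ∀ r : ℝ, 0.9 ≤ r → α r = 0

lemma eNorm_nonneg (v : ℝ × ℝ) : 0 ≤ eNorm v := Real.sqrt_nonneg _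

lemma sq_add_sq_lt_one {v : ℝ × ℝ} (hv : eNorm v < 1) : v.1 ^ 2 + v.2 ^ 2 < 1 := by
  have h0 : (0:ℝ) ≤ v.1 ^ 2 + v.2 ^ 2 := by positivity
  have h1 := Real.sq_sqrt h0
  unfold eNorm at hv
  nlinarith [Real.sqrt_nonneg (v.1 ^ 2 + v.2 ^ 2)]

lemma eNorm_twist (α : ℝ → ℝ) (v : ℝ × ℝ) : eNorm (twist α v) = eNorm v := by
  unfold twist rot eNorm
  congr 1
  have := Real.sin_sq_add_cos_sq (α (Real.sqrt (v.1 ^ 2 + v.2 ^ 2)))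
  dsimp
  nlinarith [this]

lemma cylLift_q2 {v : ℝ × ℝ} (hv : v.1 ∈ Set.Ico (-π) (-π + 2 * π)) :
    cylLift (q2 v) = v := by
  unfold cylLift q2
  have : AddCircle.equivIco (2*π) (-π) ((v.1 : ℝ) : AddCircle (2*π)) = ⟨v.1, hv⟩ := by
    rw [Equiv.apply_eq_iff_eq_symm_apply]; rfl
  rw [this]

/-- any map at C⁰-distance less than π − 2 from g has no fixed points in D. -/
theorem no_fixed_points_in_disk (α : ℝ → ℝ) (hα : TwistAngle α) (h : Cyl → Cyl)
    (hclose : (⨆ x : Cyl, ENNReal.ofReal (cylDist (h x) (gmap α x))) <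
      ENNReal.ofReal (π - 2)) :
    ∀ p ∈ Dset, h p ≠ p := by
  rintro p ⟨v, hv, rfl⟩ hfix
  have hpi : (3:ℝ) < π := Real.pi_gt_three
  -- bounds on coordinates of v
  have hv2 : v.1 ^ 2 + v.2 ^ 2 < 1 := sq_add_sq_lt_one hv
  have hv1 : |v.1| < 1 := by
    rw [← sq_lt_one_iff_abs_lt_one]; nlinarith [sq_nonneg v.2]
  have hvIco : v.1 ∈ Set.Ico (-π) (-π + 2 * π) := by
    constructor <;> [nlinarith [abs_lt.mp hv1]; nlinarith [abs_lt.mp hv1]]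
  have hlift : cylLift (q2 v) = v := cylLift_q2 hvIco
  -- the twisted point w
  set w : ℝ × ℝ := twist α v with hw
  have hwnorm : eNorm w = eNorm v := eNorm_twist α v
  have hw2 : w.1 ^ 2 + w.2 ^ 2 < 1 := sq_add_sq_lt_one (hwnorm ▸ hv)
  have hw1 : |w.1| < 1 := by
    rw [← sq_lt_one_iff_abs_lt_one]; nlinarith [sq_nonneg w.2]
  -- identify g (q2 v)
  have hg : gmap α (q2 v) = (((w.1 + π : ℝ) : AddCircle (2*π)), w.2) := by
    unfold gmap phi psi
    simp only [Function.comp_apply]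
    rw [hlift]
    rfl
  -- extract the pointwise bound from hclose
  have hle : ENNReal.ofReal (cylDist (h (q2 v)) (gmap α (q2 v))) <
      ENNReal.ofReal (π - 2) :=
    lt_of_le_of_lt (le_iSup (fun x : Cyl => ENNReal.ofReal (cylDist (h x) (gmap α x))) (q2 v))
      hclose
  have hdlt : cylDist (h (q2 v)) (gmap α (q2 v)) < π - 2 :=
    (ENNReal.ofReal_lt_ofReal_iff_of_nonneg (Real.sqrt_nonneg _)).mp hle
  rw [hfix, hg] at hdlt
  -- lower bound: the circle distance is > π - 2
  set d1 : ℝ := dist ((q2 v).1) (((w.1 + π : ℝ) : AddCircle (2*π))) with hd1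
  have hcd : d1 ≤ cylDist (q2 v) (((w.1 + π : ℝ) : AddCircle (2*π)), w.2) := by
    unfold cylDist
    have : d1 = Real.sqrt (d1 ^ 2) := (Real.sqrt_sq dist_nonneg).symm
    rw [this]
    apply Real.sqrt_le_sqrt
    simp only [← hd1]
    nlinarith [sq_nonneg (dist (q2 v).2 w.2), Real.sq_sqrt (sq_nonneg d1)]
  -- compute d1
  have habs : d1 = ‖((v.1 - (w.1 + π) : ℝ) : AddCircle (2*π))‖ := by
    rw [hd1]
    show dist ((v.1 : ℝ) : AddCircle (2*π)) _ = _
    rw [dist_eq_norm]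
    rfl
  set s : ℝ := v.1 - (w.1 + π) with hs
  have hsl : -(π + 2) < s := by have := abs_lt.mp hv1; have := abs_lt.mp hw1; simp [hs]; linarith
  have hsu : s < -(π - 2) := by have := abs_lt.mp hv1; have := abs_lt.mp hw1; simp [hs]; linarith
  have hnorm : ‖((s : ℝ) : AddCircle (2*π))‖ = |s - round ((2*π)⁻¹ * s) * (2*π)| :=
    AddCircle.norm_eq (2*π)
  set n : ℤ := round ((2*π)⁻¹ * s) with hn
  have hbig : π - 2 < |s - (n : ℝ) * (2*π)| := by
    rcases le_or_gt (n : ℝ) (-1) with hcase | hcase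
    · -- n ≤ -1 : s - n·2π ≥ s + 2π > π - 2
      have : π - 2 < s - (n : ℝ) * (2*π) := by nlinarith
      exact lt_of_lt_of_le this (le_abs_self _)
    · -- n ≥ 0 : s - n·2π ≤ s < -(π-2)
      have hn0 : (0:ℝ) ≤ (n : ℝ) := by
        have : (-1 : ℤ) < n := by exact_mod_cast hcase
        have : (0 : ℤ) ≤ n := by omega
        exact_mod_cast this
      have : π - 2 < -(s - (n : ℝ) * (2*π)) := by nlinarith
      exact lt_of_lt_of_le this (neg_le_abs _)
  have hd1big : π - 2 < d1 := by rw [habs, hnorm]; exact hbig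
  linarith [hcd, hdlt]
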